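/- Let R be an arbitrary integral domain (in the graded case assume [R]_1 ≠ 0), and let v, w ∈ R^n be non-trivial column vectors. Then there exist a symmetric matrix S ∈ R^{n×n} and an element λ ∈ R with λ ≠ 0, det S ≠ 0, and S v = λ w. -/

import Mathlib

/-- Let `R` be an integral domain and `v, w ∈ Rⁿ` nonzero column vectors.
Then there exist a symmetric matrix `S ∈ R^{n×n}` and `λ ∈ R` with `λ ≠ 0`, `det S ≠ 0`
and `S v = λ w`. -/
theorem exists_symmetric_matrix_mulVec_eq_smul
    {R : Type} [CommRing R] [IsDomain R] {n : ℕ}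
    (v w : Fin n → R) (hv : v ≠ 0) (hw : w ≠ 0) :
    ∃ (S : Matrix (Fin n) (Fin n) R) (l : R),
      S.IsSymm ∧ l ≠ 0 ∧ S.det ≠ 0 ∧ S.mulVec v = l • w := by
  classical
  obtain ⟨i, hvi⟩ : ∃ i, v i ≠ 0 := by
    by_contra h; push_neg at h; exact hv (funext fun i => h i)
  set P : Matrix (Fin n) (Fin n) R := (1 : Matrix (Fin n) (Fin n) R).updateCol i v with hPdef
  have hPdet : P.det = v i := by
    rw [hPdef, ← Matrix.cramer_apply, Matrix.cramer_one]; rfl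
  have hPdet0 : P.det ≠ 0 := by rw [hPdet]; exact hvi
  have hPe : P.mulVec (Pi.single i 1) = v := by
    funext k
    simp [Matrix.mulVec_single, hPdef, Matrix.updateCol_apply]
  set u : Fin n → R := P.transpose.mulVec w with hudef
  have hadj : P.adjugate * P = P.det • 1 := Matrix.adjugate_mul P
  have hadj' : P * P.adjugate = P.det • 1 := Matrix.mul_adjugate P
  have hPTu : P.adjugate.transpose.mulVec u = P.det • w := by
    rw [hudef, Matrix.mulVec_mulVec, ← Matrix.transpose_mul, hadj',
      Matrix.transpose_smul, Matrix.transpose_one, Matrix.smul_mulVec,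
      Matrix.one_mulVec]
  have hu0 : u ≠ 0 := by
    intro h
    have := hPTu
    rw [h, Matrix.mulVec_zero] at this
    obtain ⟨k, hk⟩ : ∃ k, w k ≠ 0 := by
      by_contra h'; push_neg at h'; exact hw (funext fun k => h' k)
    have := congrFun this k
    simp only [Pi.zero_apply, Pi.smul_apply, smul_eq_mul] at this
    exact hk ((mul_eq_zero.mp this.symm).resolve_left hPdet0)
  -- key step: a symmetric nondegenerate matrix sending `eᵢ` to `u`
  have key : ∃ M : Matrix (Fin n) (Fin n) R,
      M.IsSymm ∧ M.det ≠ 0 ∧ M.mulVec (Pi.single i 1) = u := by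
    by_cases hA : ∃ j, j ≠ i ∧ u j ≠ 0
    · obtain ⟨j, hji, huj⟩ := hA
      refine ⟨fun k l => if k = i then u l else if l = i then u k
        else if k = l ∧ k ≠ j then 1 else 0, ?_, ?_, ?_⟩
      · ext k l
        change (if l = i then u k else if k = i then u l else if l = k ∧ l ≠ j then 1 else 0) = (if k = i then u l else if l = i then u k else if k = l ∧ k ≠ j then 1 else 0)
        by_cases hk : k = i <;> by_cases hl : l = i
        · simp [hk, hl]
        · simp [hk, hl]
        · simp [hk, hl]
        · simp only [hk, hl, if_false]
          by_cases hkl : k = l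
          · subst hkl; rfl
          · simp [hkl, Ne.symm hkl]
      · apply Matrix.separatingLeft_iff_det_ne_zero.mp
        intro x hx
        have hc : ∀ l, (∑ k, x k * (if k = i then u l else if l = i then u k
            else if k = l ∧ k ≠ j then 1 else 0)) = 0 := by
          intro l
          have h := hx (Pi.single l 1)
          convert h using 1
          simp only [dotProduct, Matrix.mulVec]
          congr 1
          · congr; exact Subsingleton.elim _ _
          funext k
          congr 1
          by_cases hk : k = i <;> by_cases hl : l = i <;> simp [hk, hl, Pi.single_apply]
        have hxi : x i = 0 := by
          have h := hc j
          rw [Finset.sum_eq_single i] at h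
          · simp only [if_pos rfl] at h
            exact (mul_eq_zero.mp h).resolve_right huj
          · intro k _ hki
            simp [hki, hji]
          · intro hni; exact absurd (Finset.mem_univ i) hni
        have hxo : ∀ k, k ≠ i → k ≠ j → x k = 0 := by
          intro k hki hkj
          have h := hc k
          rw [Finset.sum_eq_single k] at h
          · simpa [hki, hkj] using h
          · intro m _ hmk
            by_cases hmi : m = i
            · simp [hmi, hxi]
            · simp [hmi, hmk, hki]
          · intro hnk; exact absurd (Finset.mem_univ k) hnk
        have hxj : x j = 0 := by
          have h := hc i
          rw [Finset.sum_eq_single j] at h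
          · simp only [hji, if_neg, if_pos rfl] at h
            have h2 : x j * u j = 0 := by simpa [hji] using h
            exact (mul_eq_zero.mp h2).resolve_right huj
          · intro k _ hkj
            by_cases hki : k = i
            · simp [hki, hxi]
            · simp [hki, hxo k hki hkj]
          · intro hnj; exact absurd (Finset.mem_univ j) hnj
        funext k
        show x k = 0
        by_cases hki : k = i
        · rw [hki]; exact hxi
        · by_cases hkj : k = j
          · rw [hkj]; exact hxj
          · exact hxo k hki hkj
      · funext k
        simp only [Matrix.mulVec, dotProduct_single, mul_one]
        by_cases hk : k = i <;> simp [hk]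
    · push_neg at hA
      have hui : u i ≠ 0 := by
        intro h
        exact hu0 (funext fun k => by
          by_cases hk : k = i
          · rw [hk]; exact h
          · exact hA k hk)
      refine ⟨u i • (1 : Matrix (Fin n) (Fin n) R), ?_, ?_, ?_⟩
      · unfold Matrix.IsSymm
        rw [Matrix.transpose_smul, Matrix.transpose_one]
      · rw [Matrix.det_smul, Matrix.det_one, mul_one]
        exact pow_ne_zero _ hui
      · rw [Matrix.smul_mulVec, Matrix.one_mulVec]
        funext k
        by_cases hk : k = i
        · simp [hk]
        · simp [hk, (hA k hk)]
  obtain ⟨M, hMs, hMd, hMe⟩ := key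
  refine ⟨P.adjugate.transpose * M * P.adjugate, P.det ^ 2, ?_, ?_, ?_, ?_⟩
  · unfold Matrix.IsSymm
    rw [Matrix.transpose_mul, Matrix.transpose_mul, Matrix.transpose_transpose,
      hMs.eq, Matrix.mul_assoc]
  · exact pow_ne_zero _ hPdet0
  · rw [Matrix.det_mul, Matrix.det_mul, Matrix.det_transpose, Matrix.det_adjugate]
    exact mul_ne_zero (mul_ne_zero (pow_ne_zero _ hPdet0) hMd) (pow_ne_zero _ hPdet0)
  · have hv' : P.adjugate.mulVec v = P.det • (Pi.single i 1 : Fin n → R) := by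
      rw [← hPe, Matrix.mulVec_mulVec, hadj, Matrix.smul_mulVec, Matrix.one_mulVec]
    rw [← Matrix.mulVec_mulVec, ← Matrix.mulVec_mulVec, hv', Matrix.mulVec_smul, hMe,
      Matrix.mulVec_smul, hPTu, smul_smul, pow_two]
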